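/- The continuous analogue of the equality case: if f, φ : ℝ → ℝ are nonnegative, integrable, with finite second moments, ∫ φ = 1, f not a.e. 0, g = f * φ, and ∫ t² (g⊗g)(t) dt = ∫ t² (f⊗f)(t) dt, then φ equals the Dirac delta (i.e., as a probability measure, φ dt is the point mass at 0); contrapositively, if φ is an integrable function (absolutely continuous measure) with ∫ φ = 1, then the inequality is strict: ∫ t² (g⊗g) dt > ∫ t² (f⊗f) dt. -/

import Mathlib

open MeasureTheory Filter

noncomputable def convR (f φ : ℝ → ℝ) (t : ℝ) : ℝ := ∫ s, f s * φ (t - s)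

noncomputable def acorrR (f : ℝ → ℝ) (t : ℝ) : ℝ := ∫ s, f s * f (s + t)

noncomputable def JR (f : ℝ → ℝ) : ℝ := ∫ t, t ^ 2 * acorrR f t

lemma integrable_fstmoment (h : ℝ → ℝ) (hh : Integrable h)
    (hh2 : Integrable (fun t => t ^ 2 * h t)) :
    Integrable (fun t => t * h t) := by
  refine (hh.add hh2).mono (aestronglyMeasurable_id.mul hh.1) ?_
  refine Eventually.of_forall fun t => ?_
  simp only [Pi.add_apply]
  have e : h t + t ^ 2 * h t = (1 + t ^ 2) * h t := by ring
  rw [e]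
  simp only [Real.norm_eq_abs, abs_mul]
  have h1 : |t| ≤ |1 + t ^ 2| := by
    have e2 : |1 + t ^ 2| = 1 + t ^ 2 := abs_of_nonneg (by positivity)
    rw [e2]
    nlinarith [sq_nonneg (|t| - 1), sq_abs t]
  exact mul_le_mul_of_nonneg_right h1 (abs_nonneg _)

lemma JR_formula (h : ℝ → ℝ) (hh : Integrable h)
    (hh2 : Integrable (fun t => t ^ 2 * h t)) :
    JR h = 2 * ((∫ t, h t) * (∫ t, t ^ 2 * h t) - (∫ t, t * h t) ^ 2) := by
  have hh1 := integrable_fstmoment h hh hh2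
  set H0 := ∫ t, h t with hH0
  set H1 := ∫ t, t * h t with hH1
  set H2 := ∫ t, t ^ 2 * h t with hH2
  -- G on (s,u) coordinates : (u - s)^2 * (h s * h u)
  have hG : Integrable (fun p : ℝ × ℝ => (p.2 - p.1) ^ 2 * (h p.1 * h p.2))
      (volume.prod volume) := by
    have h1 : Integrable (fun p : ℝ × ℝ => h p.1 * (p.2 ^ 2 * h p.2))
        (volume.prod volume) := hh.mul_prod hh2
    have h2 : Integrable (fun p : ℝ × ℝ => (p.1 * h p.1) * (p.2 * h p.2))
        (volume.prod volume) := hh1.mul_prod hh1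
    have h3 : Integrable (fun p : ℝ × ℝ => (p.1 ^ 2 * h p.1) * h p.2)
        (volume.prod volume) := hh2.mul_prod hh
    have key : (fun p : ℝ × ℝ => (p.2 - p.1) ^ 2 * (h p.1 * h p.2))
        = fun p : ℝ × ℝ => (h p.1 * (p.2 ^ 2 * h p.2)
            - (2 : ℝ) * ((p.1 * h p.1) * (p.2 * h p.2)))
          + (p.1 ^ 2 * h p.1) * h p.2 := by
      funext p; ring
    rw [key]
    exact (h1.sub (h2.const_mul 2)).add h3
  -- measure preserving T : (t,s) ↦ (s, s + t)
  have hT : MeasurePreserving (fun p : ℝ × ℝ => (p.2, p.2 + p.1))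
      ((volume : Measure ℝ).prod volume) ((volume : Measure ℝ).prod volume) := by
    have hS : MeasurePreserving (fun p : ℝ × ℝ => (p.1, p.1 + p.2))
        ((volume : Measure ℝ).prod volume) ((volume : Measure ℝ).prod volume) :=
      (MeasurePreserving.id volume).skew_product measurable_add
        (Eventually.of_forall fun x => map_add_left_eq_self volume x)
    exact hS.comp Measure.measurePreserving_swap
  have hK : Integrable (fun p : ℝ × ℝ => p.1 ^ 2 * (h p.2 * h (p.2 + p.1)))
      (volume.prod volume) := by
    have hG' : Integrable (fun p : ℝ × ℝ => (p.2 - p.1) ^ 2 * (h p.1 * h p.2))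
        (Measure.map (fun p : ℝ × ℝ => (p.2, p.2 + p.1)) (volume.prod volume)) := by
      rwa [hT.map_eq]
    have hc := hG'.comp_measurable hT.measurable
    refine hc.congr (Eventually.of_forall fun p => ?_)
    simp only [Function.comp_apply]
    have e : p.2 + p.1 - p.2 = p.1 := by ring
    rw [e]
  have step1 : JR h = ∫ t, ∫ s, t ^ 2 * (h s * h (s + t)) := by
    unfold JR acorrR
    exact integral_congr_ae (Eventually.of_forall fun t =>
      (integral_const_mul _ _).symm)
  have step2 : (∫ t, ∫ s, t ^ 2 * (h s * h (s + t)))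
      = ∫ s, ∫ t, t ^ 2 * (h s * h (s + t)) :=
    integral_integral_swap hK
  have step3 : ∀ s : ℝ, (∫ t, t ^ 2 * (h s * h (s + t)))
      = ∫ u, (u - s) ^ 2 * (h s * h u) := by
    intro s
    have e : (fun t : ℝ => t ^ 2 * (h s * h (s + t)))
        = fun t : ℝ => ((s + t) - s) ^ 2 * (h s * h (s + t)) := by
      funext t; congr 1; ring
    rw [e]
    exact integral_add_left_eq_self (fun u => (u - s) ^ 2 * (h s * h u)) s
  have step4 : ∀ s : ℝ, (∫ u, (u - s) ^ 2 * (h s * h u))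
      = h s * H2 - (2 * H1) * (s * h s) + H0 * (s ^ 2 * h s) := by
    intro s
    have e : (fun u : ℝ => (u - s) ^ 2 * (h s * h u))
        = fun u : ℝ => (h s * (u ^ 2 * h u) - (2 * (s * h s)) * (u * h u))
            + (s ^ 2 * h s) * h u := by
      funext u; ring
    have i1 : Integrable (fun u : ℝ => h s * (u ^ 2 * h u)) volume := hh2.const_mul _
    have i2 : Integrable (fun u : ℝ => (2 * (s * h s)) * (u * h u)) volume := hh1.const_mul _
    have i3 : Integrable (fun u : ℝ => (s ^ 2 * h s) * h u) volume := hh.const_mul _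
    have i12 : Integrable (fun u : ℝ => h s * (u ^ 2 * h u) - (2 * (s * h s)) * (u * h u))
        volume := i1.sub i2
    rw [e, integral_add i12 i3, integral_sub i1 i2,
      integral_const_mul, integral_const_mul, integral_const_mul]
    rw [← hH1, ← hH2]; ring
  have step5 : (∫ s, (h s * H2 - (2 * H1) * (s * h s) + H0 * (s ^ 2 * h s)))
      = H0 * H2 - (2 * H1) * H1 + H0 * H2 := by
    have i1 : Integrable (fun s : ℝ => h s * H2) volume := hh.mul_const _
    have i2 : Integrable (fun s : ℝ => (2 * H1) * (s * h s)) volume := hh1.const_mul _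
    have i3 : Integrable (fun s : ℝ => H0 * (s ^ 2 * h s)) volume := hh2.const_mul _
    have i12 : Integrable (fun s : ℝ => h s * H2 - (2 * H1) * (s * h s)) volume := i1.sub i2
    rw [integral_add i12 i3, integral_sub i1 i2,
      integral_mul_const, integral_const_mul, integral_const_mul]
  have : JR h = H0 * H2 - (2 * H1) * H1 + H0 * H2 := by
    rw [step1, step2]
    rw [integral_congr_ae (Eventually.of_forall fun s => (step3 s).trans (step4 s))]
    exact step5
  rw [this]; ring

lemma shear_mp : MeasurePreserving (fun p : ℝ × ℝ => (p.1 - p.2, p.2))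
    ((volume : Measure ℝ).prod volume) ((volume : Measure ℝ).prod volume) := by
  have hS : MeasurePreserving (fun p : ℝ × ℝ => (p.1, p.2 - p.1))
      ((volume : Measure ℝ).prod volume) ((volume : Measure ℝ).prod volume) :=
    (MeasurePreserving.id volume).skew_product (g := fun a b => b - a)
      (measurable_snd.sub measurable_fst)
      (Eventually.of_forall fun x => by
        show Measure.map (fun t : ℝ => t - x) volume = volume
        have e : (fun t : ℝ => t - x) = fun t : ℝ => t + (-x) := by
          funext t; ring
        rw [e, map_add_right_eq_self])
  exact Measure.measurePreserving_swap.comp (hS.comp Measure.measurePreserving_swap)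

section ConvMoments

variable (f φ : ℝ → ℝ) (hf : Integrable f) (hφ : Integrable φ)
  (hf2 : Integrable (fun t => t ^ 2 * f t)) (hφ2 : Integrable (fun t => t ^ 2 * φ t))

include hf hφ hf2 hφ2

lemma convQ0 : Integrable (fun p : ℝ × ℝ => f p.2 * φ (p.1 - p.2))
    (volume.prod volume) := by
  have hG : Integrable (fun p : ℝ × ℝ => f p.2 * φ p.1) (volume.prod volume) :=
    (hφ.mul_prod hf).congr (Eventually.of_forall fun p => mul_comm _ _)
  have hG' : Integrable (fun p : ℝ × ℝ => f p.2 * φ p.1)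
      (Measure.map (fun p : ℝ × ℝ => (p.1 - p.2, p.2)) (volume.prod volume)) := by
    rwa [shear_mp.map_eq]
  exact hG'.comp_measurable shear_mp.measurable

lemma convQ1 : Integrable (fun p : ℝ × ℝ => p.1 * (f p.2 * φ (p.1 - p.2)))
    (volume.prod volume) := by
  have hf1 := integrable_fstmoment f hf hf2
  have hφ1 := integrable_fstmoment φ hφ hφ2
  have hG : Integrable (fun p : ℝ × ℝ => (p.2 + p.1) * (f p.2 * φ p.1))
      (volume.prod volume) := by
    have h1 : Integrable (fun p : ℝ × ℝ => φ p.1 * (p.2 * f p.2))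
        (volume.prod volume) := hφ.mul_prod hf1
    have h2 : Integrable (fun p : ℝ × ℝ => (p.1 * φ p.1) * f p.2)
        (volume.prod volume) := hφ1.mul_prod hf
    exact (h1.add h2).congr (Eventually.of_forall fun p => by
      simp only [Pi.add_apply]; ring)
  have hG' : Integrable (fun p : ℝ × ℝ => (p.2 + p.1) * (f p.2 * φ p.1))
      (Measure.map (fun p : ℝ × ℝ => (p.1 - p.2, p.2)) (volume.prod volume)) := by
    rwa [shear_mp.map_eq]
  refine (hG'.comp_measurable shear_mp.measurable).congr
    (Eventually.of_forall fun p => ?_)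
  simp only [Function.comp_apply]
  have e : p.2 + (p.1 - p.2) = p.1 := by ring
  rw [e]

lemma convQ2 : Integrable (fun p : ℝ × ℝ => p.1 ^ 2 * (f p.2 * φ (p.1 - p.2)))
    (volume.prod volume) := by
  have hf1 := integrable_fstmoment f hf hf2
  have hφ1 := integrable_fstmoment φ hφ hφ2
  have hG : Integrable (fun p : ℝ × ℝ => (p.2 + p.1) ^ 2 * (f p.2 * φ p.1))
      (volume.prod volume) := by
    have h1 : Integrable (fun p : ℝ × ℝ => φ p.1 * (p.2 ^ 2 * f p.2))
        (volume.prod volume) := hφ.mul_prod hf2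
    have h2 : Integrable (fun p : ℝ × ℝ => (p.1 * φ p.1) * (p.2 * f p.2))
        (volume.prod volume) := hφ1.mul_prod hf1
    have h3 : Integrable (fun p : ℝ × ℝ => (p.1 ^ 2 * φ p.1) * f p.2)
        (volume.prod volume) := hφ2.mul_prod hf
    exact ((h1.add (h2.const_mul 2)).add h3).congr
      (Eventually.of_forall fun p => by simp only [Pi.add_apply]; ring)
  have hG' : Integrable (fun p : ℝ × ℝ => (p.2 + p.1) ^ 2 * (f p.2 * φ p.1))
      (Measure.map (fun p : ℝ × ℝ => (p.1 - p.2, p.2)) (volume.prod volume)) := by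
    rwa [shear_mp.map_eq]
  refine (hG'.comp_measurable shear_mp.measurable).congr
    (Eventually.of_forall fun p => ?_)
  simp only [Function.comp_apply]
  have e : p.2 + (p.1 - p.2) = p.1 := by ring
  rw [e]

lemma conv_integrable : Integrable (convR f φ) :=
  (convQ0 f φ hf hφ hf2 hφ2).integral_prod_left

lemma conv_moment2_integrable : Integrable (fun t => t ^ 2 * convR f φ t) := by
  refine ((convQ2 f φ hf hφ hf2 hφ2).integral_prod_left).congr
    (Eventually.of_forall fun t => ?_)
  unfold convR
  exact integral_const_mul (t ^ 2) (fun s => f s * φ (t - s))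

lemma conv_moment0 : (∫ t, convR f φ t) = (∫ t, f t) * (∫ t, φ t) := by
  have step2 : (∫ t, ∫ s, f s * φ (t - s)) = ∫ s, ∫ t, f s * φ (t - s) :=
    integral_integral_swap (convQ0 f φ hf hφ hf2 hφ2)
  have step3 : ∀ s : ℝ, (∫ t, f s * φ (t - s)) = f s * ∫ t, φ t := by
    intro s
    rw [integral_const_mul]
    congr 1
    have e : (fun t : ℝ => φ (t - s)) = fun t : ℝ => φ (t + (-s)) := by
      funext t; rw [sub_eq_add_neg]
    rw [e]
    exact integral_add_right_eq_self φ (-s)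
  calc (∫ t, convR f φ t) = ∫ t, ∫ s, f s * φ (t - s) := rfl
    _ = ∫ s, ∫ t, f s * φ (t - s) := step2
    _ = ∫ s, f s * ∫ t, φ t := integral_congr_ae (Eventually.of_forall step3)
    _ = (∫ t, f t) * (∫ t, φ t) := integral_mul_const _ _

lemma conv_moment1 : (∫ t, t * convR f φ t)
    = (∫ t, t * f t) * (∫ t, φ t) + (∫ t, f t) * (∫ t, t * φ t) := by
  have hφ1 := integrable_fstmoment φ hφ hφ2
  have step1 : (∫ t, t * convR f φ t) = ∫ t, ∫ s, t * (f s * φ (t - s)) :=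
    integral_congr_ae (Eventually.of_forall fun t => (integral_const_mul _ _).symm)
  have step2 : (∫ t, ∫ s, t * (f s * φ (t - s)))
      = ∫ s, ∫ t, t * (f s * φ (t - s)) :=
    integral_integral_swap (convQ1 f φ hf hφ hf2 hφ2)
  have step3 : ∀ s : ℝ, (∫ t, t * (f s * φ (t - s)))
      = ∫ u, (s + u) * (f s * φ u) := by
    intro s
    have e : (fun t : ℝ => t * (f s * φ (t - s)))
        = fun t : ℝ => (fun u : ℝ => (s + u) * (f s * φ u)) (t + (-s)) := by
      funext t
      simp only
      rw [sub_eq_add_neg]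
      congr 1
      ring
    rw [e]
    exact integral_add_right_eq_self (fun u : ℝ => (s + u) * (f s * φ u)) (-s)
  have step4 : ∀ s : ℝ, (∫ u, (s + u) * (f s * φ u))
      = (s * f s) * (∫ t, φ t) + f s * (∫ t, t * φ t) := by
    intro s
    have i1 : Integrable (fun u : ℝ => (s * f s) * φ u) volume := hφ.const_mul _
    have i2 : Integrable (fun u : ℝ => f s * (u * φ u)) volume := hφ1.const_mul _
    have e : (fun u : ℝ => (s + u) * (f s * φ u))
        = fun u : ℝ => (s * f s) * φ u + f s * (u * φ u) := by
      funext u; ring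
    rw [e, integral_add i1 i2, integral_const_mul, integral_const_mul]
  have step5 : (∫ s, ((s * f s) * (∫ t, φ t) + f s * (∫ t, t * φ t)))
      = (∫ t, t * f t) * (∫ t, φ t) + (∫ t, f t) * (∫ t, t * φ t) := by
    have hf1 := integrable_fstmoment f hf hf2
    have i1 : Integrable (fun s : ℝ => (s * f s) * (∫ t, φ t)) volume := hf1.mul_const _
    have i2 : Integrable (fun s : ℝ => f s * (∫ t, t * φ t)) volume := hf.mul_const _
    rw [integral_add i1 i2, integral_mul_const, integral_mul_const]
  rw [step1, step2,
    integral_congr_ae (Eventually.of_forall fun s => (step3 s).trans (step4 s)), step5]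

lemma conv_moment2 : (∫ t, t ^ 2 * convR f φ t)
    = (∫ t, t ^ 2 * f t) * (∫ t, φ t) + 2 * ((∫ t, t * f t) * (∫ t, t * φ t))
      + (∫ t, f t) * (∫ t, t ^ 2 * φ t) := by
  have hφ1 := integrable_fstmoment φ hφ hφ2
  have hf1 := integrable_fstmoment f hf hf2
  have step1 : (∫ t, t ^ 2 * convR f φ t) = ∫ t, ∫ s, t ^ 2 * (f s * φ (t - s)) :=
    integral_congr_ae (Eventually.of_forall fun t => (integral_const_mul _ _).symm)
  have step2 : (∫ t, ∫ s, t ^ 2 * (f s * φ (t - s)))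
      = ∫ s, ∫ t, t ^ 2 * (f s * φ (t - s)) :=
    integral_integral_swap (convQ2 f φ hf hφ hf2 hφ2)
  have step3 : ∀ s : ℝ, (∫ t, t ^ 2 * (f s * φ (t - s)))
      = ∫ u, (s + u) ^ 2 * (f s * φ u) := by
    intro s
    have e : (fun t : ℝ => t ^ 2 * (f s * φ (t - s)))
        = fun t : ℝ => (fun u : ℝ => (s + u) ^ 2 * (f s * φ u)) (t + (-s)) := by
      funext t
      simp only
      rw [sub_eq_add_neg]
      congr 1
      ring
    rw [e]
    exact integral_add_right_eq_self (fun u : ℝ => (s + u) ^ 2 * (f s * φ u)) (-s)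
  have step4 : ∀ s : ℝ, (∫ u, (s + u) ^ 2 * (f s * φ u))
      = (s ^ 2 * f s) * (∫ t, φ t) + (2 * (s * f s)) * (∫ t, t * φ t)
        + f s * (∫ t, t ^ 2 * φ t) := by
    intro s
    have i1 : Integrable (fun u : ℝ => (s ^ 2 * f s) * φ u) volume := hφ.const_mul _
    have i2 : Integrable (fun u : ℝ => (2 * (s * f s)) * (u * φ u)) volume := hφ1.const_mul _
    have i3 : Integrable (fun u : ℝ => f s * (u ^ 2 * φ u)) volume := hφ2.const_mul _
    have i12 : Integrable (fun u : ℝ => (s ^ 2 * f s) * φ u + (2 * (s * f s)) * (u * φ u))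
        volume := i1.add i2
    have e : (fun u : ℝ => (s + u) ^ 2 * (f s * φ u))
        = fun u : ℝ => ((s ^ 2 * f s) * φ u + (2 * (s * f s)) * (u * φ u))
            + f s * (u ^ 2 * φ u) := by
      funext u; ring
    rw [e, integral_add i12 i3, integral_add i1 i2,
      integral_const_mul, integral_const_mul, integral_const_mul]
  have step5 : (∫ s, ((s ^ 2 * f s) * (∫ t, φ t) + (2 * (s * f s)) * (∫ t, t * φ t)
        + f s * (∫ t, t ^ 2 * φ t)))
      = (∫ t, t ^ 2 * f t) * (∫ t, φ t) + 2 * ((∫ t, t * f t) * (∫ t, t * φ t))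
        + (∫ t, f t) * (∫ t, t ^ 2 * φ t) := by
    have i1 : Integrable (fun s : ℝ => (s ^ 2 * f s) * (∫ t, φ t)) volume := hf2.mul_const _
    have i2 : Integrable (fun s : ℝ => (2 * (s * f s)) * (∫ t, t * φ t)) volume := by
      exact ((hf1.const_mul 2).congr (Eventually.of_forall fun s => by ring)).mul_const _
    have i3 : Integrable (fun s : ℝ => f s * (∫ t, t ^ 2 * φ t)) volume := hf.mul_const _
    have i12 : Integrable (fun s : ℝ => (s ^ 2 * f s) * (∫ t, φ t)
        + (2 * (s * f s)) * (∫ t, t * φ t)) volume := i1.add i2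
    rw [integral_add i12 i3, integral_add i1 i2,
      integral_mul_const, integral_mul_const, integral_mul_const]
    have e2 : (∫ s : ℝ, 2 * (s * f s)) = 2 * ∫ s : ℝ, s * f s := integral_const_mul _ _
    rw [e2]
    ring
  rw [step1, step2,
    integral_congr_ae (Eventually.of_forall fun s => (step3 s).trans (step4 s)), step5]

end ConvMoments

/-- continuous equality case — if `φ` is an integrable density
(a genuine function) of unit mass, the focusing inequality is strict. -/
theorem focusing_inequality_continuous_strict
    (f φ : ℝ → ℝ)
    (hf0 : ∀ t, 0 ≤ f t) (hφ0 : ∀ t, 0 ≤ φ t)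
    (hf : Integrable f) (hφ : Integrable φ)
    (hf2 : Integrable (fun t => t ^ 2 * f t))
    (hφ2 : Integrable (fun t => t ^ 2 * φ t))
    (hφ1 : ∫ t, φ t = 1)
    (hfne : ¬ (f =ᵐ[volume] 0)) :
    JR f < JR (convR f φ) := by
  have hφm1 := integrable_fstmoment φ hφ hφ2
  set F0 := ∫ t, f t with hF0
  set F1 := ∫ t, t * f t with hF1
  set F2 := ∫ t, t ^ 2 * f t with hF2
  set P1 := ∫ t, t * φ t with hP1
  set P2 := ∫ t, t ^ 2 * φ t with hP2
  -- positivity of ∫ f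
  have hF0pos : 0 < F0 := by
    rcases lt_or_eq_of_le (integral_nonneg (f := f) hf0) with h | h
    · exact h
    · exact absurd ((integral_eq_zero_iff_of_nonneg hf0 hf).mp h.symm) hfne
  -- positive variance of φ
  have hVar : 0 < P2 - P1 ^ 2 := by
    have hint : Integrable (fun s : ℝ => (s - P1) ^ 2 * φ s) volume := by
      have i1 : Integrable (fun s : ℝ => s ^ 2 * φ s) volume := hφ2
      have i2 : Integrable (fun s : ℝ => (2 * P1) * (s * φ s)) volume := hφm1.const_mul _
      have i3 : Integrable (fun s : ℝ => P1 ^ 2 * φ s) volume := hφ.const_mul _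
      refine ((i1.sub i2).add i3).congr (Eventually.of_forall fun s => ?_)
      simp only [Pi.add_apply, Pi.sub_apply]; ring
    have hval : (∫ s, (s - P1) ^ 2 * φ s) = P2 - P1 ^ 2 := by
      have i1 : Integrable (fun s : ℝ => s ^ 2 * φ s) volume := hφ2
      have i2 : Integrable (fun s : ℝ => (2 * P1) * (s * φ s)) volume := hφm1.const_mul _
      have i3 : Integrable (fun s : ℝ => P1 ^ 2 * φ s) volume := hφ.const_mul _
      have i12 : Integrable (fun s : ℝ => s ^ 2 * φ s - (2 * P1) * (s * φ s)) volume :=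
        i1.sub i2
      have e : (fun s : ℝ => (s - P1) ^ 2 * φ s)
          = fun s : ℝ => (s ^ 2 * φ s - (2 * P1) * (s * φ s)) + P1 ^ 2 * φ s := by
        funext s; ring
      rw [e, integral_add i12 i3, integral_sub i1 i2,
        integral_const_mul, integral_const_mul]
      rw [← hP1, ← hP2, hφ1]
      ring
    have hnonneg : 0 ≤ ∫ s, (s - P1) ^ 2 * φ s :=
      integral_nonneg fun s => mul_nonneg (sq_nonneg _) (hφ0 s)
    rcases lt_or_eq_of_le hnonneg with h | h
    · rwa [hval] at h
    · exfalso
      have hzero : (fun s : ℝ => (s - P1) ^ 2 * φ s) =ᵐ[volume] 0 :=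
        (integral_eq_zero_iff_of_nonneg
          (fun s => mul_nonneg (sq_nonneg _) (hφ0 s)) hint).mp h.symm
      have hne : ∀ᵐ s : ℝ, s ≠ P1 := by
        rw [ae_iff]
        have : {s : ℝ | ¬ s ≠ P1} = {P1} := by
          ext s; simp
        rw [this]
        exact Real.volume_singleton
      have hφzero : φ =ᵐ[volume] 0 := by
        filter_upwards [hzero, hne] with s h1 h2
        simp only [Pi.zero_apply] at h1 ⊢
        have hne2 : (s - P1) ^ 2 ≠ 0 := pow_ne_zero _ (sub_ne_zero_of_ne h2)
        exact (mul_eq_zero.mp h1).resolve_left hne2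
      have : (∫ t, φ t) = 0 := by
        rw [integral_congr_ae hφzero]
        simp
      rw [hφ1] at this
      exact one_ne_zero this
  -- moment formulas
  have hJf : JR f = 2 * (F0 * F2 - F1 ^ 2) := JR_formula f hf hf2
  have hgint := conv_integrable f φ hf hφ hf2 hφ2
  have hgint2 := conv_moment2_integrable f φ hf hφ hf2 hφ2
  have hJg : JR (convR f φ)
      = 2 * ((∫ t, convR f φ t) * (∫ t, t ^ 2 * convR f φ t)
        - (∫ t, t * convR f φ t) ^ 2) := JR_formula _ hgint hgint2
  rw [conv_moment0 f φ hf hφ hf2 hφ2, conv_moment1 f φ hf hφ hf2 hφ2,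
    conv_moment2 f φ hf hφ hf2 hφ2, hφ1] at hJg
  rw [← hF0, ← hF1, ← hF2, ← hP1, ← hP2] at hJg
  have key : JR (convR f φ) - JR f = 2 * F0 ^ 2 * (P2 - P1 ^ 2) := by
    rw [hJf, hJg]; ring
  nlinarith [mul_pos (mul_pos (by norm_num : (0:ℝ) < 2) (pow_pos hF0pos 2)) hVar]
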